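/- For every positive integer n, \sum_{l=0}^{n} (-1)^l B_{n-l}^{(-l)} = 0. -/

import Mathlib

open PowerSeries Finset

/-- Unsigned Stirling numbers of the first kind. -/
def stirling1 : ℕ → ℕ → ℕ
  | 0, 0 => 1
  | 0, _ + 1 => 0
  | _ + 1, 0 => 0
  | n + 1, m + 1 => stirling1 n m + n * stirling1 n (m + 1)

/-- Stirling numbers of the second kind. -/
def stirling2 : ℕ → ℕ → ℕ
  | 0, 0 => 1
  | 0, _ + 1 => 0
  | _ + 1, 0 => 0
  | n + 1, m + 1 => stirling2 n m + (m + 1) * stirling2 n (m + 1)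

/-- e^t as a formal power series over ℚ. -/
noncomputable def expQ : PowerSeries ℚ := PowerSeries.exp ℚ

/-- e^{-t} as a formal power series over ℚ. -/
noncomputable def expNegQ : PowerSeries ℚ := rescale (-1) expQ

/-- The formal power series Li_k(1-e^{-t})/(1-e^{-t}) = ∑_{m≥0} (m+1)^{-k} (1-e^{-t})^m,
  defined coefficientwise (the tail vanishes since (1-e^{-t})^m has order m). -/
noncomputable def liEGF (k : ℤ) : PowerSeries ℚ :=
  PowerSeries.mk fun j =>
    ∑ m ∈ range (j + 1), ((m : ℚ) + 1) ^ (-k) * coeff j ((1 - expNegQ) ^ m)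

/-- EGF of the poly-Bernoulli polynomials: e^{-xt} Li_k(1-e^{-t})/(1-e^{-t}). -/
noncomputable def pbEGF (k : ℤ) (x : ℚ) : PowerSeries ℚ := rescale (-x) expQ * liEGF k

/-- Poly-Bernoulli polynomial value B_m^{(k)}(x). -/
noncomputable def pbPoly (k : ℤ) (x : ℚ) (m : ℕ) : ℚ := m.factorial * coeff m (pbEGF k x)

/-- Poly-Bernoulli number B_m^{(k)}. -/
noncomputable def pbB (k : ℤ) (m : ℕ) : ℚ := pbPoly k 0 m

/-- Poly-Bernoulli number C_m^{(k)}. -/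
noncomputable def pbC (k : ℤ) (m : ℕ) : ℚ := pbPoly k 1 m

/-- 𝓑_m^{(-l)}(n) = ∑_{j=0}^n [n j] B_m^{(-l-j)}(n). -/
noncomputable def scrB (l m n : ℕ) : ℚ :=
  ∑ j ∈ range (n + 1), (stirling1 n j : ℚ) * pbPoly (-(l : ℤ) - j) n m

lemma stirling2_zero_right : ∀ n, stirling2 n 0 = if n = 0 then 1 else 0
  | 0 => rfl
  | _ + 1 => rfl

lemma stirling2_eq_zero : ∀ n k, n < k → stirling2 n k = 0
  | 0, _ + 1, _ => rfl
  | n + 1, k + 1, h => by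
    have h1 : n < k := by omega
    have h2 : n < k + 1 := by omega
    simp [stirling2, stirling2_eq_zero n k h1, stirling2_eq_zero n (k+1) h2]

lemma stirling2_sum (i : ℕ) : ∀ n, ∑ m ∈ range (n + 1), stirling2 m i * (i + 1) ^ (n - m)
    = stirling2 (n + 1) (i + 1)
  | 0 => by simp [stirling2, stirling2_zero_right]
  | n + 1 => by
    rw [sum_range_succ]
    have : ∀ m ∈ range (n + 1), stirling2 m i * (i + 1) ^ (n + 1 - m)
        = (i + 1) * (stirling2 m i * (i + 1) ^ (n - m)) := by
      intro m hm
      rw [mem_range] at hm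
      have : n + 1 - m = (n - m) + 1 := by omega
      rw [this, pow_succ]; ring
    rw [sum_congr rfl this, ← mul_sum, stirling2_sum i n]
    simp [stirling2]; ring

lemma W_sum (N : ℕ) : ∑ i ∈ range (N + 1), (-1 : ℚ) ^ i * i.factorial * stirling2 (N + 1) (i + 1)
    = if N = 0 then 1 else 0 := by
  have expand : ∀ i, (stirling2 (N + 1) (i + 1) : ℚ) = stirling2 N i + (i + 1) * stirling2 N (i + 1) := by
    intro i; simp [stirling2]
  simp_rw [expand, mul_add]
  rw [sum_add_distrib]
  have hA : ∑ i ∈ range (N + 1), (-1 : ℚ) ^ i * i.factorial * stirling2 N i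
      = (if N = 0 then 1 else 0)
        - ∑ i ∈ range N, (-1 : ℚ) ^ i * i.factorial * ((i + 1) * stirling2 N (i + 1)) := by
    rw [sum_range_succ']
    have : ∀ i ∈ range N, (-1 : ℚ) ^ (i + 1) * (i + 1).factorial * stirling2 N (i + 1)
        = -((-1 : ℚ) ^ i * i.factorial * ((i + 1) * stirling2 N (i + 1))) := by
      intro i _
      rw [pow_succ, Nat.factorial_succ]
      push_cast; ring
    rw [sum_congr rfl this, sum_neg_distrib]
    simp [stirling2_zero_right N]
    ring
  have hB : ∑ i ∈ range (N + 1), (-1 : ℚ) ^ i * i.factorial * ((i + 1) * stirling2 N (i + 1))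
      = ∑ i ∈ range N, (-1 : ℚ) ^ i * i.factorial * ((i + 1) * stirling2 N (i + 1)) := by
    rw [sum_range_succ, stirling2_eq_zero N (N + 1) (by omega)]
    simp
  rw [hA, hB]; ring

lemma coeff_derivativeFun' (f : ℚ⟦X⟧) (n : ℕ) :
    coeff n f.derivativeFun = coeff (n + 1) f * (n + 1) := coeff_derivative f n

lemma derivativeFun_exp : (exp ℚ).derivativeFun = exp ℚ := by
  ext n
  rw [coeff_derivativeFun', coeff_exp, coeff_exp]
  have ha : ∀ q : ℚ, algebraMap ℚ ℚ q = q := fun q => rfl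
  rw [ha, ha, Nat.factorial_succ]
  have h2 : (n.factorial : ℚ) ≠ 0 := Nat.cast_ne_zero.2 (Nat.factorial_ne_zero _)
  have h3 : ((n : ℚ) + 1) ≠ 0 := by positivity
  field_simp
  try push_cast
  try ring

lemma derivativeFun_one_sub : (exp ℚ - 1).derivativeFun = exp ℚ := by
  rw [sub_eq_add_neg, derivativeFun_add, derivativeFun_exp,
    ← neg_one_smul ℚ (1 : ℚ⟦X⟧), derivativeFun_smul, derivativeFun_one, smul_zero, add_zero]

lemma derivativeFun_exp_sub_one_pow : ∀ i : ℕ,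
    ((exp ℚ - 1) ^ (i + 1)).derivativeFun
      = ((i + 1 : ℕ) : ℚ⟦X⟧) * ((exp ℚ - 1) ^ (i + 1) + (exp ℚ - 1) ^ i)
  | 0 => by
    rw [pow_one, derivativeFun_one_sub]
    push_cast
    ring
  | i + 1 => by
    rw [pow_succ, derivativeFun_mul, derivativeFun_exp_sub_one_pow i, derivativeFun_one_sub]
    have hexp : exp ℚ = (exp ℚ - 1) + 1 := by ring
    rw [smul_eq_mul, smul_eq_mul, hexp]
    push_cast
    ring

lemma coeff_exp_sub_one_pow : ∀ j i : ℕ,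
    (coeff j ((exp ℚ - 1) ^ i) : ℚ) * j.factorial = i.factorial * stirling2 j i
  | 0, i => by
    rw [coeff_zero_eq_constantCoeff, map_pow]
    have : constantCoeff (exp ℚ - 1) = 0 := by
      rw [map_sub, constantCoeff_exp, map_one, sub_self]
    rw [this]
    cases i with
    | zero => simp [stirling2]
    | succ i => simp [zero_pow, stirling2_eq_zero 0 (i + 1) (by omega)]
  | j + 1, 0 => by
    simp [coeff_one, stirling2_zero_right]
  | j + 1, i + 1 => by
    have h := congrArg (coeff j) (derivativeFun_exp_sub_one_pow i)
    have hc : ((i + 1 : ℕ) : ℚ⟦X⟧) = C ((i + 1 : ℕ) : ℚ) := by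
      rw [← map_natCast C]
    rw [coeff_derivativeFun', hc, coeff_C_mul, map_add] at h
    have h1 := coeff_exp_sub_one_pow j (i + 1)
    have h2 := coeff_exp_sub_one_pow j i
    have hfact : ((j + 1).factorial : ℚ) = (j + 1) * j.factorial := by
      rw [Nat.factorial_succ]; push_cast; ring
    have hst : (stirling2 (j + 1) (i + 1) : ℚ)
        = stirling2 j i + (i + 1) * stirling2 j (i + 1) := by
      simp [stirling2]
    have hfi : ((i + 1).factorial : ℚ) = (i + 1) * i.factorial := by
      rw [Nat.factorial_succ]; push_cast; ring
    rw [hfact, hst, hfi]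
    have hcast : ((i + 1 : ℕ) : ℚ) = (i : ℚ) + 1 := by push_cast; ring
    rw [hcast] at h
    calc coeff (j + 1) ((exp ℚ - 1) ^ (i + 1)) * (((j:ℚ) + 1) * j.factorial)
        = (coeff (j + 1) ((exp ℚ - 1) ^ (i + 1)) * ((j:ℚ) + 1)) * j.factorial := by ring
      _ = (((i:ℚ) + 1) * (coeff j ((exp ℚ - 1) ^ (i + 1)) + coeff j ((exp ℚ - 1) ^ i))) * j.factorial := by rw [h]
      _ = ((i:ℚ) + 1) * (coeff j ((exp ℚ - 1) ^ (i + 1)) * j.factorial)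
          + ((i:ℚ) + 1) * (coeff j ((exp ℚ - 1) ^ i) * j.factorial) := by ring
      _ = ((i:ℚ) + 1) * ((i + 1).factorial * stirling2 j (i + 1))
          + ((i:ℚ) + 1) * (i.factorial * stirling2 j i) := by rw [h1, h2]
      _ = ((i:ℚ) + 1) * i.factorial * ((stirling2 j i : ℚ) + ((i:ℚ) + 1) * stirling2 j (i + 1)) := by
          rw [hfi]; ring

lemma coeff_one_sub_expNegQ_pow (m i : ℕ) :
    coeff m ((1 - expNegQ) ^ i) = (-1) ^ (i + m) * coeff m ((exp ℚ - 1) ^ i) := by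
  have h : (1 - expNegQ) = -(rescale (-1 : ℚ) (exp ℚ - 1)) := by
    rw [map_sub, map_one]
    unfold expNegQ expQ
    ring
  have hC : ((-1 : ℚ⟦X⟧) ^ i) = C ((-1 : ℚ) ^ i) := by
    rw [map_pow, map_neg, map_one]
  rw [h, neg_pow, ← map_pow, hC, coeff_C_mul, coeff_rescale, pow_add]
  ring

lemma pbB_formula (l m : ℕ) :
    pbB (-(l : ℤ)) m
      = ∑ i ∈ range (m + 1),
          (-1 : ℚ) ^ (m + i) * i.factorial * stirling2 m i * ((i : ℚ) + 1) ^ l := by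
  unfold pbB pbPoly pbEGF
  rw [neg_zero, rescale_zero]
  have h1 : (C.comp (constantCoeff)) expQ = 1 := by
    rw [RingHom.comp_apply]
    unfold expQ
    rw [constantCoeff_exp, map_one]
  rw [h1, one_mul]
  unfold liEGF
  rw [coeff_mk, mul_sum]
  apply sum_congr rfl
  intro i _
  rw [neg_neg, zpow_natCast, coeff_one_sub_expNegQ_pow]
  have hc := coeff_exp_sub_one_pow m i
  linear_combination ((-1 : ℚ) ^ (i + m) * ((i : ℚ) + 1) ^ l) * hc

theorem alternating_sum_polyBernoulli (n : ℕ) (hn : 1 ≤ n) :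
    ∑ l ∈ range (n + 1), (-1 : ℚ) ^ l * pbB (-(l : ℤ)) (n - l) = 0 := by
  set f : ℕ → ℚ := fun m =>
    ∑ i ∈ range (m + 1),
      (-1 : ℚ) ^ (n + i) * i.factorial * stirling2 m i * ((i : ℚ) + 1) ^ (n - m) with hf
  have key : ∀ l ∈ range (n + 1),
      (-1 : ℚ) ^ l * pbB (-(l : ℤ)) (n - l) = f (n + 1 - 1 - l) := by
    intro l hl
    rw [mem_range] at hl
    have hl' : n + 1 - 1 - l = n - l := by omega
    rw [hl', pbB_formula, hf, mul_sum]
    apply sum_congr rfl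
    intro i _
    have he : n - (n - l) = l := by omega
    rw [he]
    have hpow : (-1 : ℚ) ^ l * (-1 : ℚ) ^ (n - l + i) = (-1 : ℚ) ^ (n + i) := by
      rw [← pow_add]
      congr 1
      omega
    linear_combination ((i.factorial : ℚ) * stirling2 (n - l) i * ((i : ℚ) + 1) ^ l) * hpow
  rw [sum_congr rfl key, Finset.sum_range_reflect]
  have hext : ∀ m ∈ range (n + 1), f m
      = ∑ i ∈ range (n + 1),
          (-1 : ℚ) ^ (n + i) * i.factorial * stirling2 m i * ((i : ℚ) + 1) ^ (n - m) := by
    intro m hm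
    rw [mem_range] at hm
    rw [hf]
    apply Finset.sum_subset
    · exact range_subset_range.mpr (by omega)
    · intro i hi hni
      rw [mem_range] at hi hni
      rw [stirling2_eq_zero m i (by omega)]
      simp
  rw [sum_congr rfl hext, Finset.sum_comm]
  have hin : ∀ i ∈ range (n + 1),
      ∑ m ∈ range (n + 1),
          (-1 : ℚ) ^ (n + i) * i.factorial * stirling2 m i * ((i : ℚ) + 1) ^ (n - m)
      = (-1 : ℚ) ^ n * ((-1 : ℚ) ^ i * i.factorial * stirling2 (n + 1) (i + 1)) := by
    intro i _
    have hterm : ∀ m ∈ range (n + 1),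
        (-1 : ℚ) ^ (n + i) * i.factorial * stirling2 m i * ((i : ℚ) + 1) ^ (n - m)
        = ((-1 : ℚ) ^ (n + i) * i.factorial) * ((stirling2 m i * (i + 1) ^ (n - m) : ℕ) : ℚ) := by
      intro m _
      push_cast
      ring
    rw [sum_congr rfl hterm, ← mul_sum, ← Nat.cast_sum, stirling2_sum i n, pow_add]
    ring
  rw [sum_congr rfl hin, ← mul_sum, W_sum]
  have hne : n ≠ 0 := by omega
  simp [hne]
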